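/- For every real number β with −1 < β < 1, one has (2β² + 1)·arccos(β) − 3β√(1 − β²) > 0. -/

import Mathlib

open Real

private lemma sqrt_hasDeriv' {x : ℝ} (h₁ : -1 < x) (h₂ : x < 1) :
    HasDerivAt (fun y : ℝ => Real.sqrt (1 - y^2)) (-x / Real.sqrt (1 - x^2)) x := by
  have hx0 : (0:ℝ) < 1 - x^2 := by nlinarith
  have hx : (1 - x^2) ≠ 0 := ne_of_gt hx0
  have hin : HasDerivAt (fun y : ℝ => 1 - y^2) (-(2 * x ^ 1)) x :=
    (hasDerivAt_pow 2 x).const_sub 1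
  have h := (Real.hasDerivAt_sqrt hx).comp x hin
  have hs : 0 < Real.sqrt (1 - x^2) := Real.sqrt_pos.mpr hx0
  refine h.congr_deriv ?_
  field_simp

private lemma g_hasDeriv {x : ℝ} (h₁ : -1 < x) (h₂ : x < 1) :
    HasDerivAt (fun y : ℝ => y * Real.arccos y - Real.sqrt (1 - y^2)) (Real.arccos x) x := by
  have ha := Real.hasDerivAt_arccos (ne_of_gt h₁) (ne_of_lt h₂)
  have hm := ((hasDerivAt_id x).mul ha).sub (sqrt_hasDeriv' h₁ h₂)
  have hs : 0 < Real.sqrt (1 - x^2) := Real.sqrt_pos.mpr (by nlinarith)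
  refine hm.congr_deriv ?_
  field_simp
  simp only [id]
  ring

private lemma g_neg {x : ℝ} (h₁ : -1 < x) (h₂ : x < 1) :
    x * Real.arccos x - Real.sqrt (1 - x^2) < 0 := by
  have hmono : StrictMonoOn (fun y : ℝ => y * Real.arccos y - Real.sqrt (1 - y^2))
      (Set.Icc (-1) 1) := by
    apply strictMonoOn_of_deriv_pos (convex_Icc _ _)
    · exact ((continuous_id.mul Real.continuous_arccos).sub
        ((continuous_const.sub (continuous_pow 2)).sqrt)).continuousOn
    · intro y hy
      rw [interior_Icc] at hy
      rw [(g_hasDeriv hy.1 hy.2).deriv]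
      exact Real.arccos_pos.mpr hy.2
  have := hmono ⟨h₁.le, h₂.le⟩ ⟨by norm_num, le_refl 1⟩ h₂
  simpa [Real.arccos_one] using this

private lemma f_hasDeriv {x : ℝ} (h₁ : -1 < x) (h₂ : x < 1) :
    HasDerivAt (fun y : ℝ => (2*y^2 + 1) * Real.arccos y - 3*y*Real.sqrt (1 - y^2))
      (4 * (x * Real.arccos x - Real.sqrt (1 - x^2))) x := by
  have ha := Real.hasDerivAt_arccos (ne_of_gt h₁) (ne_of_lt h₂)
  have h1 : HasDerivAt (fun y : ℝ => 2*y^2 + 1) (2 * (2 * x ^ 1)) x :=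
    ((hasDerivAt_pow 2 x).const_mul 2).add_const 1
  have h2 : HasDerivAt (fun y : ℝ => (3:ℝ)*y) 3 x := by
    simpa using (hasDerivAt_id x).const_mul (3:ℝ)
  have hm := (h1.mul ha).sub ((h2.mul (sqrt_hasDeriv' h₁ h₂)))
  have hx0 : (0:ℝ) < 1 - x^2 := by nlinarith
  have hs : 0 < Real.sqrt (1 - x^2) := Real.sqrt_pos.mpr hx0
  have hsq : Real.sqrt (1 - x^2) ^ 2 = 1 - x^2 := Real.sq_sqrt hx0.le
  refine hm.congr_deriv ?_
  field_simp
  nlinarith [hsq, hs]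

/-- Positivity of `ϱ₃(β) = (2β² + 1)·arccos β − 3β√(1 − β²)` on `(−1, 1)`. -/
theorem stmt_17 (β : ℝ) (h₁ : -1 < β) (h₂ : β < 1) :
    0 < (2*β^2 + 1) * Real.arccos β - 3*β*Real.sqrt (1 - β^2) := by
  have hanti : StrictAntiOn (fun y : ℝ => (2*y^2 + 1) * Real.arccos y - 3*y*Real.sqrt (1 - y^2))
      (Set.Icc (-1) 1) := by
    apply strictAntiOn_of_deriv_neg (convex_Icc _ _)
    · exact (((continuous_const.mul (continuous_pow 2)).add continuous_const).mul
        Real.continuous_arccos |>.sub ((continuous_const.mul continuous_id).mul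
        ((continuous_const.sub (continuous_pow 2)).sqrt))).continuousOn
    · intro y hy
      rw [interior_Icc] at hy
      rw [(f_hasDeriv hy.1 hy.2).deriv]
      have := g_neg hy.1 hy.2
      linarith
  have := hanti ⟨h₁.le, h₂.le⟩ ⟨by norm_num, le_refl 1⟩ h₂
  simpa [Real.arccos_one] using this
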